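/- Fix n ≥ 1 and a formal power series β. Then (d/dg)^{n-1}[β(g)^n] = Σ_{T} ∏_{j∈U} β^{(deg_T(j))}(g), where the sum is over all labeled rooted trees T on an n-element set U and deg_T(j) = |T^{-1}(j)| is the number of children of j. -/

import Mathlib

open Polynomial

/-- A labeled rooted tree on the vertex set `Fin n`. -/
def IsRTree (n : ℕ) (rp : Fin n × (Fin n → Fin n)) : Prop :=
  rp.2 rp.1 = rp.1 ∧ ∀ j : Fin n, ∃ k : ℕ, rp.2^[k] j = rp.1

noncomputable section
open scoped Classical

abbrev RT (n : ℕ) := {rp : Fin n × (Fin n → Fin n) // IsRTree n rp}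

def degv {n : ℕ} (T : RT n) : Fin n → ℕ :=
  fun j => Nat.card {i : Fin n // i ≠ T.val.1 ∧ T.val.2 i = j}

def fibv {m n : ℕ} (f : Fin m → Fin n) : Fin n → ℕ :=
  fun j => Nat.card {i : Fin m // f i = j}

lemma card_congr_iff {α : Type*} {P Q : α → Prop} (h : ∀ a, P a ↔ Q a) :
    Nat.card {a // P a} = Nat.card {a // Q a} :=
  Nat.card_congr (Equiv.subtypeEquivRight h)

lemma card_subtype_fin_succ {N : ℕ} (P : Fin (N + 1) → Prop) :
    Nat.card {i : Fin (N + 1) // P i}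
      = (if P 0 then 1 else 0) + Nat.card {i : Fin N // P i.succ} := by
  simp only [Nat.card_eq_fintype_card, Fintype.card_subtype, Finset.card_filter]
  rw [Fin.sum_univ_succ]

lemma card_subtype_fin_castSucc {N : ℕ} (P : Fin (N + 1) → Prop) :
    Nat.card {i : Fin (N + 1) // P i}
      = (if P (Fin.last N) then 1 else 0) + Nat.card {i : Fin N // P i.castSucc} := by
  simp only [Nat.card_eq_fintype_card, Fintype.card_subtype, Finset.card_filter]
  rw [Fin.sum_univ_castSucc, add_comm]

lemma fibv_cons {m n : ℕ} (v : Fin n) (g : Fin m → Fin n) (j : Fin n) :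
    fibv (Fin.cons v g) j = (if v = j then 1 else 0) + fibv g j := by
  have := card_subtype_fin_succ (fun i => (Fin.cons v g : Fin (m+1) → Fin n) i = j)
  simp only [Fin.cons_zero, Fin.cons_succ] at this
  simpa [fibv] using this

lemma fibv_zero {n : ℕ} (f : Fin 0 → Fin n) (j : Fin n) : fibv f j = 0 := by
  simp [fibv, Nat.card_eq_fintype_card]

lemma sum_fibv {m n : ℕ} (f : Fin m → Fin n) : ∑ j, fibv f j = m := by
  simp only [fibv, Nat.card_eq_fintype_card, Fintype.card_subtype, Finset.card_filter]
  rw [Finset.sum_comm]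
  simp
lemma iter_deriv_sum {ι : Type*} (s : Finset ι) (m : ℕ) (g : ι → ℚ[X]) :
    derivative^[m] (∑ x ∈ s, g x) = ∑ x ∈ s, derivative^[m] (g x) := by
  induction m generalizing g with
  | zero => simp
  | succ m ih =>
      rw [Function.iterate_succ_apply]
      rw [map_sum derivative g s]
      exact ih _

lemma derivative_finset_prod {ι : Type*} [DecidableEq ι] (s : Finset ι) (f : ι → ℚ[X]) :
    derivative (∏ i ∈ s, f i) = ∑ i ∈ s, (∏ j ∈ s.erase i, f j) * derivative (f i) := by
  induction s using Finset.induction_on with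
  | empty => simp
  | insert a s ha ih =>
      rw [Finset.prod_insert ha, derivative_mul, Finset.sum_insert ha, Finset.erase_insert ha,
        ih, Finset.mul_sum]
      congr 1
      · exact mul_comm _ _
      · refine Finset.sum_congr rfl (fun i hi => ?_)
        have hai : a ≠ i := fun h => ha (h ▸ hi)
        rw [Finset.erase_insert_of_ne hai,
          Finset.prod_insert (fun h => ha (Finset.mem_of_mem_erase h)), mul_assoc]

lemma leibniz (m : ℕ) : ∀ {n : ℕ} (β : Fin n → ℚ[X]),
    derivative^[m] (∏ j, β j) = ∑ f : Fin m → Fin n, ∏ j, derivative^[fibv f j] (β j) := by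
  induction m with
  | zero =>
      intro n β
      rw [Fintype.sum_eq_single (fun (i : Fin 0) => i.elim0)]
      · simp [fibv_zero]
      · intro f hf; exact absurd (Subsingleton.elim _ _) hf
  | succ m ih =>
      intro n β
      rw [Function.iterate_succ_apply, derivative_finset_prod]
      have hupd : ∀ v : Fin n, (∏ a ∈ Finset.univ.erase v, β a) * derivative (β v)
          = ∏ j, Function.update β v (derivative (β v)) j := by
        intro v
        rw [Finset.prod_update_of_mem (Finset.mem_univ v), Finset.sdiff_singleton_eq_erase, mul_comm]
      rw [Finset.sum_congr rfl (fun v _ => hupd v), iter_deriv_sum]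
      have hstep : ∀ (v : Fin n) (f : Fin m → Fin n),
          (∏ j, derivative^[fibv f j] (Function.update β v (derivative (β v)) j))
            = ∏ j, derivative^[fibv (Fin.cons v f : Fin (m+1) → Fin n) j] (β j) := by
        intro v f
        refine Finset.prod_congr rfl (fun j _ => ?_)
        rw [fibv_cons]
        by_cases hj : v = j
        · subst hj
          rw [Function.update_self, if_pos rfl, add_comm,
            Function.iterate_succ_apply]
        · rw [Function.update_of_ne (Ne.symm hj), if_neg hj, zero_add]
      calc ∑ v, derivative^[m] (∏ j, Function.update β v (derivative (β v)) j)
          = ∑ v, ∑ f : Fin m → Fin n,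
              ∏ j, derivative^[fibv (Fin.cons v f : Fin (m+1) → Fin n) j] (β j) := by
            refine Finset.sum_congr rfl (fun v _ => ?_)
            rw [ih]
            exact Finset.sum_congr rfl (fun f _ => hstep v f)
        _ = ∑ x : Fin n × (Fin m → Fin n),
              ∏ j, derivative^[fibv (Fin.cons x.1 x.2 : Fin (m+1) → Fin n) j] (β j) :=
            (Fintype.sum_prod_type
              (fun x : Fin n × (Fin m → Fin n) =>
                ∏ j, derivative^[fibv (Fin.cons x.1 x.2 : Fin (m+1) → Fin n) j] (β j))).symm
        _ = ∑ f : Fin (m+1) → Fin n, ∏ j, derivative^[fibv f j] (β j) :=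
            Fintype.sum_equiv (Fin.consEquiv (fun _ => Fin n)) _ _ (fun x => rfl)
section TreePart
variable {m : ℕ}

lemma finite_sub {n : ℕ} (P : Fin n → Prop) : Finite {i // P i} := Subtype.finite

lemma root_has_child {n : ℕ} (T : RT n) (j : Fin n) (hj : j ≠ T.val.1) :
    ∃ i, i ≠ T.val.1 ∧ T.val.2 i = T.val.1 := by
  obtain ⟨k, hk⟩ := T.prop.2 j
  have hex : ∃ k, T.val.2^[k] j = T.val.1 := ⟨k, hk⟩
  have hk0 : T.val.2^[Nat.find hex] j = T.val.1 := Nat.find_spec hex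
  have hk0pos : Nat.find hex ≠ 0 := by
    intro h
    rw [h] at hk0
    exact hj hk0
  obtain ⟨k1, hk1⟩ : ∃ k1, Nat.find hex = k1 + 1 := ⟨Nat.find hex - 1, by omega⟩
  refine ⟨T.val.2^[k1] j, Nat.find_min hex (by omega), ?_⟩
  have := hk0
  rw [hk1, Function.iterate_succ_apply'] at this
  exact this

lemma degv_root_pos {n : ℕ} (T : RT n) (j : Fin n) (hj : j ≠ T.val.1) :
    degv T T.val.1 ≠ 0 := by
  obtain ⟨i, hi⟩ := root_has_child T j hj
  have : Nonempty {i // i ≠ T.val.1 ∧ T.val.2 i = T.val.1} := ⟨⟨i, hi⟩⟩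
  have := finite_sub (fun i => i ≠ T.val.1 ∧ T.val.2 i = T.val.1)
  exact Nat.card_pos.ne'

lemma not_child_of_degv_zero {n : ℕ} (T : RT n) (j : Fin n) (h : degv T j = 0)
    (i : Fin n) (hir : i ≠ T.val.1) : T.val.2 i ≠ j := by
  intro hij
  have : Nonempty {i // i ≠ T.val.1 ∧ T.val.2 i = j} := ⟨⟨i, hir, hij⟩⟩
  have := finite_sub (fun i => i ≠ T.val.1 ∧ T.val.2 i = j)
  exact absurd h Nat.card_pos.ne'

variable (T : RT (m + 2))

lemma last_ne_root (h0 : degv T (Fin.last (m + 1)) = 0) : Fin.last (m + 1) ≠ T.val.1 := by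
  intro h
  have h01 : (0 : Fin (m+2)) ≠ Fin.last (m+1) := by
    intro hc
    have := congrArg Fin.val hc
    simp [Fin.last] at this
  exact degv_root_pos T 0 (h ▸ h01) (h ▸ h0)

lemma parent_ne_last (h0 : degv T (Fin.last (m + 1)) = 0) (i : Fin (m + 2))
    (hi : i ≠ Fin.last (m + 1)) : T.val.2 i ≠ Fin.last (m + 1) := by
  by_cases hir : i = T.val.1
  · subst hir
    rw [T.prop.1]
    exact hi
  · exact not_child_of_degv_zero T _ h0 i hir

lemma plast_ne_last (h0 : degv T (Fin.last (m + 1)) = 0) :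
    T.val.2 (Fin.last (m + 1)) ≠ Fin.last (m + 1) := by
  intro h
  obtain ⟨k, hk⟩ := T.prop.2 (Fin.last (m + 1))
  rw [Function.iterate_fixed h k] at hk
  exact last_ne_root T h0 hk

/-- the parent map of the extension of a tree by a new leaf `last` attached at `castSucc q`. -/
def extParent (q : Fin (m + 1)) (T0 : RT (m + 1)) : Fin (m + 2) → Fin (m + 2) :=
  fun i => if h : i = Fin.last (m + 1) then q.castSucc else (T0.val.2 (i.castPred h)).castSucc

lemma extParent_last (q : Fin (m + 1)) (T0 : RT (m + 1)) :
    extParent q T0 (Fin.last (m + 1)) = q.castSucc := dif_pos rfl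

lemma extParent_castSucc (q : Fin (m + 1)) (T0 : RT (m + 1)) (i : Fin (m + 1)) :
    extParent q T0 i.castSucc = (T0.val.2 i).castSucc := by
  rw [extParent, dif_neg (Fin.castSucc_lt_last i).ne, Fin.castPred_castSucc]

lemma extParent_iterate (q : Fin (m + 1)) (T0 : RT (m + 1)) (k : ℕ) (i : Fin (m + 1)) :
    (extParent q T0)^[k] i.castSucc = (T0.val.2^[k] i).castSucc := by
  induction k generalizing i with
  | zero => rfl
  | succ k ih => rw [Function.iterate_succ_apply, extParent_castSucc, ih, ← Function.iterate_succ_apply]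

/-- attach a new leaf `last` whose parent is `castSucc q`. -/
def extendTree (q : Fin (m + 1)) (T0 : RT (m + 1)) : RT (m + 2) :=
  ⟨(T0.val.1.castSucc, extParent q T0),
   by
    constructor
    · show extParent q T0 T0.val.1.castSucc = T0.val.1.castSucc
      rw [extParent_castSucc, T0.prop.1]
    · intro j
      refine Fin.lastCases ?_ (fun j0 => ?_) j
      · obtain ⟨k, hk⟩ := T0.prop.2 q
        refine ⟨k + 1, ?_⟩
        show (extParent q T0)^[k+1] (Fin.last (m+1)) = T0.val.1.castSucc
        rw [Function.iterate_succ_apply, extParent_last, extParent_iterate, hk]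
      · obtain ⟨k, hk⟩ := T0.prop.2 j0
        refine ⟨k, ?_⟩
        show (extParent q T0)^[k] j0.castSucc = T0.val.1.castSucc
        rw [extParent_iterate, hk]⟩

lemma extendTree_root (q : Fin (m + 1)) (T0 : RT (m + 1)) :
    (extendTree q T0).val.1 = T0.val.1.castSucc := rfl

lemma extendTree_parent (q : Fin (m + 1)) (T0 : RT (m + 1)) :
    (extendTree q T0).val.2 = extParent q T0 := rfl

/-- contract the leaf `last` of a tree on `Fin (m+2)`. -/
def restrictTree (h0 : degv T (Fin.last (m + 1)) = 0) : Fin (m + 1) × RT (m + 1) :=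
  (Fin.castPred (T.val.2 (Fin.last (m + 1))) (plast_ne_last T h0),
   ⟨(Fin.castPred T.val.1 (Ne.symm (last_ne_root T h0)),
     fun i => Fin.castPred (T.val.2 i.castSucc)
       (parent_ne_last T h0 i.castSucc (Fin.castSucc_lt_last i).ne)),
    by
      have hiter : ∀ (k : ℕ) (j : Fin (m+1)),
          Fin.castSucc ((fun i => Fin.castPred (T.val.2 i.castSucc)
            (parent_ne_last T h0 i.castSucc (Fin.castSucc_lt_last i).ne))^[k] j)
          = T.val.2^[k] j.castSucc := by
        intro k
        induction k with
        | zero => intro j; rfl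
        | succ k ih =>
            intro j
            rw [Function.iterate_succ_apply', Function.iterate_succ_apply',
              Fin.castSucc_castPred, ih]
      constructor
      · apply Fin.castSucc_injective
        rw [Fin.castSucc_castPred, Fin.castSucc_castPred]
        exact T.prop.1
      · intro j
        obtain ⟨k, hk⟩ := T.prop.2 j.castSucc
        refine ⟨k, ?_⟩
        apply Fin.castSucc_injective
        rw [Fin.castSucc_castPred, hiter]
        exact hk⟩)

lemma restrictTree_fst (h0 : degv T (Fin.last (m + 1)) = 0) :
    (restrictTree T h0).1 = Fin.castPred (T.val.2 (Fin.last (m + 1))) (plast_ne_last T h0) := rfl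

lemma restrictTree_root (h0 : degv T (Fin.last (m + 1)) = 0) :
    (restrictTree T h0).2.val.1 = Fin.castPred T.val.1 (Ne.symm (last_ne_root T h0)) := rfl

lemma restrictTree_parent (h0 : degv T (Fin.last (m + 1)) = 0) (i : Fin (m + 1)) :
    (restrictTree T h0).2.val.2 i = Fin.castPred (T.val.2 i.castSucc)
      (parent_ne_last T h0 i.castSucc (Fin.castSucc_lt_last i).ne) := rfl

lemma extend_restrict (h0 : degv T (Fin.last (m + 1)) = 0) :
    extendTree (restrictTree T h0).1 (restrictTree T h0).2 = T := by
  apply Subtype.ext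
  apply Prod.ext
  · rw [extendTree_root, restrictTree_root, Fin.castSucc_castPred]
  · rw [extendTree_parent]
    funext i
    refine Fin.lastCases ?_ (fun i0 => ?_) i
    · rw [extParent_last, restrictTree_fst, Fin.castSucc_castPred]
    · rw [extParent_castSucc, restrictTree_parent, Fin.castSucc_castPred]

lemma degv_extend_last (q : Fin (m + 1)) (T0 : RT (m + 1)) :
    degv (extendTree q T0) (Fin.last (m + 1)) = 0 := by
  have : IsEmpty {i : Fin (m+2) // i ≠ (extendTree q T0).val.1
      ∧ (extendTree q T0).val.2 i = Fin.last (m + 1)} := by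
    refine ⟨fun x => ?_⟩
    obtain ⟨i, hi1, hi2⟩ := x
    rw [extendTree_parent] at hi2
    revert hi2
    refine Fin.lastCases ?_ (fun i0 => ?_) i
    · rw [extParent_last]
      exact (Fin.castSucc_lt_last q).ne
    · rw [extParent_castSucc]
      exact (Fin.castSucc_lt_last _).ne
  rw [degv, Nat.card_of_isEmpty]

lemma restrict_extend (q : Fin (m + 1)) (T0 : RT (m + 1)) :
    restrictTree (extendTree q T0) (degv_extend_last q T0) = (q, T0) := by
  apply Prod.ext
  · apply Fin.castSucc_injective
    rw [restrictTree_fst, Fin.castSucc_castPred, extendTree_parent, extParent_last]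
  · apply Subtype.ext
    apply Prod.ext
    · apply Fin.castSucc_injective
      rw [restrictTree_root, Fin.castSucc_castPred, extendTree_root]
    · funext i
      apply Fin.castSucc_injective
      rw [restrictTree_parent, Fin.castSucc_castPred, extendTree_parent, extParent_castSucc]

lemma degv_extend_castSucc (q : Fin (m + 1)) (T0 : RT (m + 1)) (j : Fin (m + 1)) :
    degv (extendTree q T0) j.castSucc = (if q = j then 1 else 0) + degv T0 j := by
  rw [degv, card_subtype_fin_castSucc (fun i => i ≠ (extendTree q T0).val.1
      ∧ (extendTree q T0).val.2 i = j.castSucc)]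
  have h1 : Fin.last (m+1) ≠ (extendTree q T0).val.1 := by
    rw [extendTree_root]
    exact Ne.symm (Fin.castSucc_lt_last T0.val.1).ne
  have h2 : (extendTree q T0).val.2 (Fin.last (m+1)) = q.castSucc := by
    rw [extendTree_parent, extParent_last]
  congr 1
  · by_cases h : q = j
    · rw [if_pos h, if_pos ⟨h1, by rw [h2, h]⟩]
    · rw [if_neg h, if_neg]
      rintro ⟨-, hc⟩
      rw [h2] at hc
      exact h (Fin.castSucc_injective _ hc)
  · apply card_congr_iff
    intro i
    have h3 : (extendTree q T0).val.2 i.castSucc = (T0.val.2 i).castSucc := by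
      rw [extendTree_parent, extParent_castSucc]
    rw [h3, extendTree_root]
    constructor
    · rintro ⟨ha, hb⟩
      exact ⟨fun hc => ha (by rw [hc]), Fin.castSucc_injective _ hb⟩
    · rintro ⟨ha, hb⟩
      exact ⟨fun hc => ha (Fin.castSucc_injective _ hc), by rw [hb]⟩

end TreePart
section CardPart

lemma E1card {m : ℕ} (d : Fin (m + 2) → ℕ) (hd : d (Fin.last (m + 1)) = 0) :
    Nat.card {T : RT (m + 2) // degv T = d}
      = Nat.card {x : Fin (m + 1) × RT (m + 1) //
          (fun j => (if x.1 = j then 1 else 0) + degv x.2 j) = d ∘ Fin.castSucc} := by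
  apply Nat.card_congr
  have h0 : ∀ T : {T : RT (m + 2) // degv T = d}, degv T.1 (Fin.last (m+1)) = 0 :=
    fun T => (congrFun T.2 (Fin.last (m+1))).trans hd
  refine ⟨fun T => ⟨restrictTree T.1 (h0 T), ?_⟩,
    fun x => ⟨extendTree x.val.1 x.val.2, ?_⟩, fun T => ?_, fun x => ?_⟩
  · funext j
    show (if (restrictTree T.1 (h0 T)).1 = j then 1 else 0)
        + degv (restrictTree T.1 (h0 T)).2 j = d j.castSucc
    rw [← degv_extend_castSucc, extend_restrict]
    exact congrFun T.2 _
  · funext j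
    refine Fin.lastCases ?_ (fun j0 => ?_) j
    · rw [degv_extend_last, hd]
    · rw [degv_extend_castSucc]
      exact congrFun x.prop j0
  · exact Subtype.ext (extend_restrict T.1 (h0 T))
  · apply Subtype.ext
    show restrictTree (extendTree x.val.1 x.val.2) (degv_extend_last x.val.1 x.val.2) = x.val
    rw [restrict_extend]

lemma card_prod_eq_sum {N : ℕ} {γ : Type*} [Finite γ] (P : Fin N × γ → Prop) :
    Nat.card {x : Fin N × γ // P x} = ∑ q, Nat.card {c : γ // P (q, c)} := by
  haveI := Fintype.ofFinite γ
  have e : {x : Fin N × γ // P x} ≃ Σ q : Fin N, {c : γ // P (q, c)} :=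
    ⟨fun x => ⟨x.val.1, ⟨x.val.2, by rw [Prod.mk.eta]; exact x.prop⟩⟩,
     fun s => ⟨(s.1, s.2.val), s.2.prop⟩,
     fun x => by apply Subtype.ext; exact Prod.mk.eta,
     fun s => rfl⟩
  rw [Nat.card_congr e, Nat.card_eq_fintype_card, Fintype.card_sigma]
  simp [Nat.card_eq_fintype_card]

lemma E2card {k N : ℕ} (e : Fin N → ℕ) :
    Nat.card {f : Fin (k + 1) → Fin N // fibv f = e}
      = Nat.card {x : Fin N × (Fin k → Fin N) //
          (fun j => (if x.1 = j then 1 else 0) + fibv x.2 j) = e} := by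
  apply Nat.card_congr
  refine Equiv.symm (Equiv.subtypeEquiv (Fin.consEquiv (fun _ => Fin N)) (fun x => ?_))
  have hfc : fibv (Fin.cons x.1 x.2 : Fin (k+1) → Fin N)
      = fun j => (if x.1 = j then 1 else 0) + fibv x.2 j := funext (fibv_cons _ _)
  show _ ↔ fibv (Fin.cons x.1 x.2 : Fin (k+1) → Fin N) = e
  rw [hfc]

lemma ne_of_fibv_zero {k N : ℕ} (f : Fin k → Fin N) (j : Fin N) (h : fibv f j = 0)
    (i : Fin k) : f i ≠ j := by
  intro hc
  have : Nonempty {i // f i = j} := ⟨⟨i, hc⟩⟩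
  have := finite_sub (fun i : Fin k => f i = j)
  exact absurd h Nat.card_pos.ne'

lemma E3card {k N : ℕ} (d : Fin (N + 1) → ℕ) (hd : d (Fin.last N) = 0) :
    Nat.card {f : Fin k → Fin (N + 1) // fibv f = d}
      = Nat.card {g : Fin k → Fin N // fibv g = d ∘ Fin.castSucc} := by
  apply Nat.card_congr
  have hne : ∀ (f : {f : Fin k → Fin (N + 1) // fibv f = d}) (i : Fin k),
      f.val i ≠ Fin.last N :=
    fun f i => ne_of_fibv_zero f.val _ ((congrFun f.prop _).trans hd) i
  refine ⟨fun f => ⟨fun i => Fin.castPred (f.val i) (hne f i), ?_⟩,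
    fun g => ⟨fun i => (g.val i).castSucc, ?_⟩, fun f => ?_, fun g => ?_⟩
  · funext j
    show Nat.card {i : Fin k // Fin.castPred (f.val i) (hne f i) = j} = d j.castSucc
    rw [card_congr_iff (Q := fun i : Fin k => f.val i = j.castSucc)
      (fun i => by rw [← Fin.castSucc_inj, Fin.castSucc_castPred])]
    exact congrFun f.prop _
  · funext j
    refine Fin.lastCases ?_ (fun j0 => ?_) j
    · rw [hd]
      have : IsEmpty {i : Fin k // (g.val i).castSucc = Fin.last N} :=
        ⟨fun x => (Fin.castSucc_lt_last _).ne x.prop⟩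
      exact Nat.card_of_isEmpty
    · show Nat.card {i : Fin k // (g.val i).castSucc = j0.castSucc} = d j0.castSucc
      rw [card_congr_iff (Q := fun i : Fin k => g.val i = j0) (fun i => Fin.castSucc_inj)]
      exact congrFun g.prop j0
  · apply Subtype.ext
    funext i
    exact Fin.castSucc_castPred (f.val i) (hne f i)
  · apply Subtype.ext
    funext i
    exact Fin.castPred_castSucc ((Fin.castSucc_lt_last (g.val i)).ne)

lemma relabelF {k N : ℕ} (π : Equiv.Perm (Fin N)) (d : Fin N → ℕ) :
    Nat.card {f : Fin k → Fin N // fibv f = d ∘ π} = Nat.card {f : Fin k → Fin N // fibv f = d} := by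
  apply Nat.card_congr
  have key : ∀ (f : Fin k → Fin N) (j : Fin N), fibv (π ∘ f) j = fibv f (π.symm j) := by
    intro f j
    exact card_congr_iff (fun i => by
      show π (f i) = j ↔ f i = π.symm j
      exact Equiv.apply_eq_iff_eq_symm_apply π)
  refine Equiv.subtypeEquiv (Equiv.arrowCongr (Equiv.refl (Fin k)) π) (fun f => ?_)
  have hco : ((Equiv.arrowCongr (Equiv.refl (Fin k)) π) f) = π ∘ f := rfl
  rw [hco]
  constructor
  · intro h
    funext j
    rw [key, congrFun h (π.symm j)]
    show d (π (π.symm j)) = d j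
    rw [Equiv.apply_symm_apply]
  · intro h
    funext j
    show fibv f j = d (π j)
    have := congrFun h (π j)
    rw [key, Equiv.symm_apply_apply] at this
    exact this

lemma isRTree_conj {N : ℕ} (π : Equiv.Perm (Fin N)) (r : Fin N) (p : Fin N → Fin N)
    (h : IsRTree N (r, p)) : IsRTree N (π r, fun x => π (p (π.symm x))) := by
  have hiter : ∀ (k : ℕ) (x : Fin N),
      (fun x => π (p (π.symm x)))^[k] x = π (p^[k] (π.symm x)) := by
    intro k
    induction k with
    | zero => intro x; simp
    | succ k ih =>
        intro x
        rw [Function.iterate_succ_apply, ih, Equiv.symm_apply_apply,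
          ← Function.iterate_succ_apply]
  have h1 : p r = r := h.1
  have h2 : ∀ j, ∃ k, p^[k] j = r := h.2
  constructor
  · show π (p (π.symm (π r))) = π r
    rw [Equiv.symm_apply_apply, h1]
  · intro j
    obtain ⟨k, hk⟩ := h2 (π.symm j)
    refine ⟨k, ?_⟩
    show (fun x => π (p (π.symm x)))^[k] j = π r
    rw [hiter, hk]

lemma relabelT {N : ℕ} (π : Equiv.Perm (Fin N)) (d : Fin N → ℕ) :
    Nat.card {T : RT N // degv T = d ∘ π} = Nat.card {T : RT N // degv T = d} := by
  apply Nat.card_congr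
  have hconj : ∀ rp : Fin N × (Fin N → Fin N), IsRTree N rp ↔
      IsRTree N ((Equiv.prodCongr π (Equiv.arrowCongr π π)) rp) := by
    rintro ⟨r, p⟩
    constructor
    · intro h
      exact isRTree_conj π r p h
    · intro h
      have h2 := isRTree_conj π.symm _ _ h
      convert h2 using 2
      · exact (Equiv.symm_apply_apply π r).symm
      · funext x
        show p x = π.symm (π (p (π.symm (π x))))
        rw [Equiv.symm_apply_apply, Equiv.symm_apply_apply]
  let e : RT N ≃ RT N := Equiv.subtypeEquiv (Equiv.prodCongr π (Equiv.arrowCongr π π)) hconj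
  have hdege : ∀ (T : RT N) (j : Fin N), degv (e T) j = degv T (π.symm j) := by
    intro T j
    show Nat.card {i : Fin N // i ≠ π T.val.1 ∧ π (T.val.2 (π.symm i)) = j} = _
    rw [degv, Nat.card_congr (Equiv.subtypeEquiv π.symm (fun i => ?_))]
    show i ≠ π T.val.1 ∧ π (T.val.2 (π.symm i)) = j
      ↔ π.symm i ≠ T.val.1 ∧ T.val.2 (π.symm i) = π.symm j
    constructor
    · rintro ⟨ha, hb⟩
      refine ⟨fun hc => ha ?_, ?_⟩
      · rw [← hc, Equiv.apply_symm_apply]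
      · rw [← hb, Equiv.symm_apply_apply]
    · rintro ⟨ha, hb⟩
      refine ⟨fun hc => ha ?_, ?_⟩
      · rw [hc, Equiv.symm_apply_apply]
      · rw [hb, Equiv.apply_symm_apply]
  refine Equiv.subtypeEquiv e (fun T => ?_)
  constructor
  · intro h
    funext j
    rw [hdege, congrFun h (π.symm j)]
    show d (π (π.symm j)) = d j
    rw [Equiv.apply_symm_apply]
  · intro h
    funext j
    show degv T j = d (π j)
    have := congrFun h (π j)
    rw [hdege, Equiv.symm_apply_apply] at this
    exact this

end CardPart
section KeyPart

lemma sum_degv {n : ℕ} (T : RT n) : ∑ j, degv T j = n - 1 := by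
  simp only [degv, Nat.card_eq_fintype_card, Fintype.card_subtype]
  have h1 : ∀ j : Fin n, Finset.univ.filter (fun i => i ≠ T.val.1 ∧ T.val.2 i = j)
      = (Finset.univ.filter (fun i => i ≠ T.val.1)).filter (fun i => T.val.2 i = j) := by
    intro j
    rw [Finset.filter_filter]
  simp_rw [h1]
  rw [← Finset.card_eq_sum_card_fiberwise (f := T.val.2)
    (t := Finset.univ) (fun x _ => Finset.mem_univ _)]
  rw [Finset.filter_ne', Finset.card_erase_of_mem (Finset.mem_univ _)]
  simp

lemma perq {m : ℕ}
    (ih : ∀ d : Fin (m + 1) → ℕ, Nat.card {T : RT (m + 1) // degv T = d}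
      = Nat.card {f : Fin m → Fin (m + 1) // fibv f = d})
    (q : Fin (m + 1)) (c : Fin (m + 1) → ℕ) :
    Nat.card {T0 : RT (m + 1) // (fun j => (if q = j then 1 else 0) + degv T0 j) = c}
      = Nat.card {g : Fin m → Fin (m + 1) // (fun j => (if q = j then 1 else 0) + fibv g j) = c} := by
  by_cases hq : c q = 0
  · have e1 : IsEmpty {T0 : RT (m + 1) // (fun j => (if q = j then 1 else 0) + degv T0 j) = c} := by
      refine ⟨fun x => ?_⟩
      have := congrFun x.prop q
      simp at this
      omega
    have e2 : IsEmpty {g : Fin m → Fin (m + 1) //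
        (fun j => (if q = j then 1 else 0) + fibv g j) = c} := by
      refine ⟨fun x => ?_⟩
      have := congrFun x.prop q
      simp at this
      omega
    rw [Nat.card_of_isEmpty, Nat.card_of_isEmpty]
  · have iff1 : ∀ v : Fin (m + 1) → ℕ, ((fun j => (if q = j then 1 else 0) + v j) = c)
        ↔ (v = fun j => c j - (if q = j then 1 else 0)) := by
      intro v
      constructor
      · intro h
        funext j
        have := congrFun h j
        by_cases hj : q = j <;> simp [hj] at this ⊢ <;> omega
      · intro h
        funext j
        rw [congrFun h j]
        by_cases hj : q = j
        · simp [hj]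
          have : c j ≠ 0 := hj ▸ hq
          omega
        · simp [hj]
    rw [card_congr_iff (fun T0 : RT (m + 1) => iff1 (degv T0)),
      card_congr_iff (fun g : Fin m → Fin (m + 1) => iff1 (fibv g))]
    exact ih _

lemma degv_one (T : RT 1) (j : Fin 1) : degv T j = 0 := by
  have : IsEmpty {i : Fin 1 // i ≠ T.val.1 ∧ T.val.2 i = j} :=
    ⟨fun x => x.prop.1 (Subsingleton.elim _ _)⟩
  rw [degv, Nat.card_of_isEmpty]

lemma key : ∀ (m : ℕ) (d : Fin (m + 1) → ℕ),
    Nat.card {T : RT (m + 1) // degv T = d}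
      = Nat.card {f : Fin m → Fin (m + 1) // fibv f = d} := by
  intro m
  induction m with
  | zero =>
      intro d
      haveI hft : Subsingleton (Fin (0+1)) := ⟨fun a b => Fin.ext (by omega)⟩
      apply Nat.card_congr
      have hsub1 : Subsingleton {T : RT 1 // degv T = d} := by
        constructor
        rintro ⟨a, _⟩ ⟨b, _⟩
        exact Subtype.ext (Subtype.ext (Subsingleton.elim _ _))
      have hsub2 : Subsingleton {f : Fin 0 → Fin 1 // fibv f = d} := by
        constructor
        rintro ⟨a, _⟩ ⟨b, _⟩
        exact Subtype.ext (Subsingleton.elim _ _)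
      refine equivOfSubsingletonOfSubsingleton (fun T => ⟨Fin.elim0, ?_⟩)
        (fun f => ⟨⟨(0, id), rfl, fun j => ⟨0, Subsingleton.elim _ _⟩⟩, ?_⟩)
      · funext j
        rw [fibv_zero, ← congrFun T.prop j, degv_one]
      · funext j
        rw [show degv ⟨(0, id), rfl, fun j => ⟨0, Subsingleton.elim _ _⟩⟩ j = 0 from
          degv_one _ j, ← congrFun f.prop j, fibv_zero]
  | succ m ih =>
      intro d
      by_cases hz : ∃ i, d i = 0
      · obtain ⟨i0, hi0⟩ := hz
        set π : Equiv.Perm (Fin (m + 2)) := Equiv.swap i0 (Fin.last (m + 1)) with hπ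
        have he : (d ∘ π) (Fin.last (m + 1)) = 0 := by
          show d (π (Fin.last (m + 1))) = 0
          rw [hπ, Equiv.swap_apply_right]
          exact hi0
        rw [← relabelT π d, ← relabelF π d]
        rw [E1card (d ∘ π) he, card_prod_eq_sum, E3card (d ∘ π) he, E2card, card_prod_eq_sum]
        exact Finset.sum_congr rfl (fun q _ => perq ih q ((d ∘ π) ∘ Fin.castSucc))
      · push_neg at hz
        have e1 : IsEmpty {T : RT (m + 1 + 1) // degv T = d} := by
          refine ⟨fun x => ?_⟩
          have h1 := sum_degv x.val
          rw [x.prop] at h1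
          have h2 : ∑ j, (fun _ => 1 : Fin (m+1+1) → ℕ) j ≤ ∑ j, d j :=
            Finset.sum_le_sum (fun j _ => Nat.one_le_iff_ne_zero.mpr (hz j))
          simp only [Finset.sum_const, Finset.card_univ, Fintype.card_fin, smul_eq_mul,
            mul_one] at h2
          omega
        have e2 : IsEmpty {f : Fin (m + 1) → Fin (m + 1 + 1) // fibv f = d} := by
          refine ⟨fun x => ?_⟩
          have h1 := sum_fibv x.val
          rw [x.prop] at h1
          have h2 : ∑ j, (fun _ => 1 : Fin (m+1+1) → ℕ) j ≤ ∑ j, d j :=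
            Finset.sum_le_sum (fun j _ => Nat.one_le_iff_ne_zero.mpr (hz j))
          simp only [Finset.sum_const, Finset.card_univ, Fintype.card_fin, smul_eq_mul,
            mul_one] at h2
          omega
        rw [Nat.card_of_isEmpty, Nat.card_of_isEmpty]

end KeyPart

theorem stmt11 (n : ℕ) (hn : 1 ≤ n) (β : Polynomial ℚ) :
    Polynomial.derivative^[n - 1] (β ^ n)
      = ∑ᶠ T : {rp : Fin n × (Fin n → Fin n) // IsRTree n rp},
          ∏ j : Fin n,
            Polynomial.derivative^[Nat.card {i : Fin n // i ≠ T.val.1 ∧ T.val.2 i = j}] β := by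
  obtain ⟨m, rfl⟩ : ∃ m, n = m + 1 := ⟨n - 1, by omega⟩
  haveI : Fintype {rp : Fin (m + 1) × (Fin (m + 1) → Fin (m + 1)) // IsRTree (m + 1) rp} :=
    Fintype.ofFinite _
  rw [finsum_eq_sum_of_fintype]
  have hL := leibniz m (fun _ : Fin (m + 1) => β)
  simp only [Finset.prod_const, Finset.card_univ, Fintype.card_fin] at hL
  have hcard : ∀ c : Fin (m + 1) → ℕ,
      Fintype.card {f : Fin m → Fin (m + 1) // fibv f = c}
        = Fintype.card {T : RT (m + 1) // degv T = c} := by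
    intro c
    have := (key m c).symm
    simpa only [Nat.card_eq_fintype_card] using this
  let e : ∀ c : Fin (m + 1) → ℕ,
      {f : Fin m → Fin (m + 1) // fibv f = c} ≃ {T : RT (m + 1) // degv T = c} :=
    fun c => Fintype.equivOfCardEq (hcard c)
  let E : (Fin m → Fin (m + 1)) ≃ RT (m + 1) :=
    Equiv.ofFiberEquiv (f := fibv) (g := degv) e
  have hE : ∀ f, degv (E f) = fibv f := fun f => Equiv.ofFiberEquiv_map e f
  show Polynomial.derivative^[m] (β ^ (m + 1)) = ∑ T : RT (m + 1), ∏ j, derivative^[degv T j] β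
  rw [hL]
  refine Fintype.sum_equiv E _ _ (fun f => ?_)
  rw [hE f]
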